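/- The modified direction of the bi-potential method is a descent direction for the augmented Lagrangian functional: let μ ∈ [0, 1], let W : E →L[ℝ] E be a symmetric continuous linear map (⟪W x, y⟫ = ⟪x, W y⟫ for all x, y), let u_free ∈ E, and define J(r) = (1/2) * ⟪r, W r⟫ + ⟪u_free, r⟫. Fix r ∈ E, set u = u_free + W r and D = u + (μ * ‖u_t‖) • n. Then J is Fréchet differentiable at r with derivative h ↦ ⟪u, h⟫, and the directional derivative of J at r along -D equals -(‖u‖^2 + μ * u_n * ‖u_t‖); in particular, if u_n ≥ 0 this directional derivative is ≤ 0. -/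

import Mathlib

open scoped InnerProductSpace

noncomputable section

/-- The ambient space `E = ℝ³`. -/
abbrev E := EuclideanSpace ℝ (Fin 3)

/-- Normal component of `x` relative to the unit normal `n`. -/
def xn (n x : E) : ℝ := ⟪x, n⟫_ℝ

/-- Tangential component of `x` relative to the unit normal `n`. -/
def xt (n x : E) : E := x - (⟪x, n⟫_ℝ) • n

/-- The Coulomb cone with friction coefficient `μ`. -/
def Kcone (n : E) (μ : ℝ) : Set E := {r | ‖xt n r‖ ≤ μ * xn n r}

/-- The modified direction `D = u + (μ ‖u_t‖) • n` of the bi-potential method is a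
descent direction for the augmented Lagrangian functional
`J(r) = ½⟪r, W r⟫ + ⟪u_free, r⟫`: `J` is differentiable at `r` with derivative
`h ↦ ⟪u, h⟫`, and the directional derivative along `-D` equals
`-(‖u‖² + μ u_n ‖u_t‖)`, which is `≤ 0` whenever `u_n ≥ 0`. -/
theorem bipotential_direction_is_descent (n : E) (hn : ‖n‖ = 1)
    (μ : ℝ) (hμ0 : 0 ≤ μ) (hμ1 : μ ≤ 1)
    (W : E →L[ℝ] E) (hW : ∀ x y : E, ⟪W x, y⟫_ℝ = ⟪x, W y⟫_ℝ)
    (ufree : E) (J : E → ℝ)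
    (hJ : ∀ s : E, J s = (1 / 2) * ⟪s, W s⟫_ℝ + ⟪ufree, s⟫_ℝ)
    (r u D : E) (hu : u = ufree + W r) (hD : D = u + (μ * ‖xt n u‖) • n) :
    HasFDerivAt J (innerSL ℝ u) r ∧
      (innerSL ℝ u) (-D) = -(‖u‖ ^ 2 + μ * xn n u * ‖xt n u‖) ∧
      (0 ≤ xn n u → (innerSL ℝ u) (-D) ≤ 0) := by
  refine ⟨?_, ?_, ?_⟩
  · -- differentiability
    have h1 : HasFDerivAt (fun s : E => ⟪s, W s⟫_ℝ)
        ((fderivInnerCLM ℝ (r, W r)).comp ((ContinuousLinearMap.id ℝ E).prod W)) r :=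
      (hasFDerivAt_id r).inner ℝ (W.hasFDerivAt)
    have h2 : HasFDerivAt (fun s : E => (1 / 2) * ⟪s, W s⟫_ℝ + ⟪ufree, s⟫_ℝ)
        ((1 / 2 : ℝ) • ((fderivInnerCLM ℝ (r, W r)).comp
            ((ContinuousLinearMap.id ℝ E).prod W)) + innerSL ℝ ufree) r := by
      exact (h1.const_mul (1 / 2)).add (innerSL ℝ ufree).hasFDerivAt
    have hfun : J = fun s : E => (1 / 2) * ⟪s, W s⟫_ℝ + ⟪ufree, s⟫_ℝ := funext hJ
    rw [hfun]
    refine h2.congr_fderiv ?_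
    ext h
    simp only [ContinuousLinearMap.add_apply, ContinuousLinearMap.smul_apply,
      ContinuousLinearMap.comp_apply, ContinuousLinearMap.prod_apply,
      ContinuousLinearMap.id_apply, fderivInnerCLM_apply, innerSL_apply_apply, smul_eq_mul]
    have key : ⟪h, W r⟫_ℝ = ⟪r, W h⟫_ℝ := by rw [real_inner_comm, hW]
    rw [hu, inner_add_left, hW r h, key]
    ring
  · simp only [innerSL_apply_apply, hD, inner_neg_right, inner_add_right, inner_smul_right,
      real_inner_self_eq_norm_sq, xn]
    ring
  · intro hun
    simp only [innerSL_apply_apply, hD, inner_neg_right, inner_add_right, inner_smul_right]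
    have h1 : (0:ℝ) ≤ ⟪u, u⟫_ℝ := real_inner_self_nonneg
    have h2 : (0:ℝ) ≤ μ * ‖xt n u‖ * ⟪u, n⟫_ℝ := by
      have : ⟪u, n⟫_ℝ = xn n u := rfl
      rw [this]
      positivity
    linarith
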